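/- There is a constant c > 0 such that the following holds for every ℓ ≥ 1. Let N = 2^ℓ(2ℓ+1), let A' be the (2^ℓ × 2ℓ) matrix with rows indexed by x ∈ {0,1}^ℓ in lexicographic order given by A'[x, j] = x_j for 1 ≤ j ≤ ℓ and A'[x, j] = 1 for ℓ < j ≤ 2ℓ, and let B' be the (2ℓ × 2^ℓ·2ℓ) matrix with columns indexed by (y, k) ∈ {0,1}^ℓ × {1, …, 2ℓ} in lexicographic order given by B'[i,(y,k)] = 1 if i = k ≤ ℓ, B'[i,(y,k)] = y_{k−ℓ} if i = k > ℓ, and B'[i,(y,k)] = 0 otherwise. Let A be the N × N block matrix whose top-left (2^ℓ × 2ℓ) block is A', whose rows 2^ℓ+1, …, N restricted to columns 2ℓ+1, …, 4ℓ form the transpose of B', and all of whose remaining entries are 0. Then there exists an SLP over {0,1} of size at most c·ℓ² generating the string of length N² obtained by reading the entries of A column by column. -/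

import Mathlib

/-- A rule of a straight-line program: either a terminal symbol, or the ordered
pair `(j, k)` of the indices of two strictly earlier rules to be concatenated. -/
inductive SLPRule (α : Type*) where
  | sym (a : α)
  | pair (j k : ℕ)

/-- A straight-line program (SLP) over the alphabet `α`: a finite sequence of
rules, where each pair rule may only reference strictly earlier rules. -/
structure SLP (α : Type*) where
  rules : List (SLPRule α)
  wf : ∀ i : Fin rules.length, match rules.get i with
    | .sym _ => True
    | .pair j k => j < i.val ∧ k < i.val

/-- The size of an SLP is its number of rules. -/
def SLP.size {α : Type*} (G : SLP α) : ℕ := G.rules.length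

/-- The list of the strings `eval(R_1), …, eval(R_n)` generated by the
successive rules of an SLP: a symbol rule evaluates to the corresponding
one-letter string, and a pair rule `(j, k)` evaluates to the concatenation
of the evaluations of the (earlier) rules `R_j` and `R_k`. -/
def SLP.evals {α : Type*} (G : SLP α) : List (List α) :=
  G.rules.foldl (fun acc r =>
    acc ++ [match r with
      | .sym a => [a]
      | .pair j k => acc.getD j [] ++ acc.getD k []]) []

/-- An SLP generates the string which its last rule evaluates to. -/
def SLP.generates {α : Type*} (G : SLP α) (s : List α) : Prop :=
  G.evals.getLast? = some s

/-- The `j`-th bit (0-indexed, most significant bit first) of the `ℓ`-bit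
binary representation of `x`, as an element of the alphabet `{0,1}`. -/
def bitOf2 (ℓ x j : ℕ) : Fin 2 := if x / 2 ^ (ℓ - 1 - j) % 2 = 1 then 1 else 0

namespace S16

abbrev Rule := SLPRule (Fin 2)

def ev (rs : List Rule) : List (List (Fin 2)) :=
  rs.foldl (fun acc r =>
    acc ++ [match r with
      | .sym a => [a]
      | .pair j k => acc.getD j [] ++ acc.getD k []]) []

def WF (rs : List Rule) : Prop := ∀ i : Fin rs.length, match rs.get i with
    | .sym _ => True
    | .pair j k => j < i.val ∧ k < i.val

theorem ev_snoc (rs : List Rule) (r : Rule) :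
    ev (rs ++ [r]) = ev rs ++ [match r with
      | .sym a => [a]
      | .pair j k => (ev rs).getD j [] ++ (ev rs).getD k []] := by
  unfold ev
  rw [List.foldl_append]
  rfl

theorem length_ev (rs : List Rule) : (ev rs).length = rs.length := by
  induction rs using List.reverseRecOn with
  | nil => rfl
  | append_singleton rs r ih => rw [ev_snoc]; simp [ih]

theorem ev_prefix (rs ts : List Rule) : ev rs <+: ev (rs ++ ts) := by
  induction ts using List.reverseRecOn with
  | nil => simp
  | append_singleton ts r ih =>
      rw [← List.append_assoc, ev_snoc]
      exact ih.trans (List.prefix_append _ _)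

theorem WF_snoc {rs : List Rule} (h : WF rs) (r : Rule)
    (hr : match r with | .sym _ => True | .pair j k => j < rs.length ∧ k < rs.length) :
    WF (rs ++ [r]) := by
  intro i
  rcases lt_or_ge i.val rs.length with hi | hi
  · have : (rs ++ [r]).get i = rs.get ⟨i.val, hi⟩ := by
      simp only [List.get_eq_getElem]
      exact List.getElem_append_left hi
    rw [this]
    exact h ⟨i.val, hi⟩
  · have hieq : i.val = rs.length := by
      have := i.isLt; simp at this; omega
    have : (rs ++ [r]).get i = r := by
      simp only [List.get_eq_getElem]
      rw [List.getElem_append_right (by omega)]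
      simp [hieq]
    rw [this]
    cases r with
    | sym a => trivial
    | pair j k => exact ⟨by omega, by omega⟩

def Builds (n : ℕ) (s : List (Fin 2)) : Prop :=
  ∀ rs : List Rule, WF rs → ∃ ts : List Rule,
    WF (rs ++ ts) ∧ ts.length ≤ n ∧ 0 < ts.length ∧
    (ev (rs ++ ts)).getLast? = some s

theorem Builds.mono {n m : ℕ} {s : List (Fin 2)} (h : Builds n s) (hnm : n ≤ m) :
    Builds m s := by
  intro rs hrs
  obtain ⟨ts, w, l, p, e⟩ := h rs hrs
  exact ⟨ts, w, l.trans hnm, p, e⟩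

theorem getD_last {α : Type*} {l : List α} {x : α} (h : l.getLast? = some x) (d : α) :
    l.getD (l.length - 1) d = x := by
  rw [List.getD_eq_getElem?_getD, ← List.getLast?_eq_getElem?, h]
  rfl

theorem getD_of_prefix {α : Type*} {l l' : List α} (h : l <+: l') {n : ℕ}
    (hn : n < l.length) (d : α) : l'.getD n d = l.getD n d := by
  obtain ⟨t, rfl⟩ := h
  exact List.getD_append _ _ _ _ hn

theorem ne_nil_of_getLast? {α : Type*} {l : List α} {x : α} (h : l.getLast? = some x) :
    l ≠ [] := by
  intro hl; subst hl; simp at h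

theorem builds_sym (a : Fin 2) : Builds 1 [a] := by
  intro rs h
  refine ⟨[.sym a], WF_snoc h _ trivial, le_refl _, one_pos, ?_⟩
  rw [ev_snoc]
  exact List.getLast?_concat

theorem builds_cat {n1 n2 : ℕ} {s1 s2 : List (Fin 2)} (h1 : Builds n1 s1)
    (h2 : Builds n2 s2) : Builds (n1 + n2 + 1) (s1 ++ s2) := by
  intro rs hrs
  obtain ⟨t1, w1, l1, p1, e1⟩ := h1 rs hrs
  obtain ⟨t2, w2, l2, p2, e2⟩ := h2 (rs ++ t1) w1
  have hR1len : 0 < (rs ++ t1).length := by simp; omega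
  have hR2len : (rs ++ t1).length ≤ (rs ++ t1 ++ t2).length := by simp
  have hlev1 : (ev (rs ++ t1)).length = (rs ++ t1).length := length_ev _
  have hlev2 : (ev (rs ++ t1 ++ t2)).length = (rs ++ t1 ++ t2).length := length_ev _
  have hne1 : 0 < (ev (rs ++ t1)).length := by
    rw [hlev1]; exact hR1len
  have hd1 : (ev (rs ++ t1 ++ t2)).getD ((rs ++ t1).length - 1) [] = s1 := by
    rw [getD_of_prefix (ev_prefix (rs ++ t1) t2) (by omega), ← hlev1]
    exact getD_last e1 _
  have hd2 : (ev (rs ++ t1 ++ t2)).getD ((rs ++ t1 ++ t2).length - 1) [] = s2 := by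
    rw [← hlev2]; exact getD_last e2 _
  refine ⟨t1 ++ t2 ++ [.pair ((rs ++ t1).length - 1) ((rs ++ t1 ++ t2).length - 1)],
    ?_, ?_, ?_, ?_⟩
  · rw [show rs ++ (t1 ++ t2 ++ [SLPRule.pair ((rs ++ t1).length - 1) ((rs ++ t1 ++ t2).length - 1)]) = (rs ++ t1 ++ t2) ++ [SLPRule.pair ((rs ++ t1).length - 1) ((rs ++ t1 ++ t2).length - 1)] by simp]
    refine WF_snoc w2 _ ⟨?_, ?_⟩
    · omega
    · have : 0 < (rs ++ t1 ++ t2).length := by omega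
      omega
  · simp; omega
  · simp
  · rw [show rs ++ (t1 ++ t2 ++ [SLPRule.pair ((rs ++ t1).length - 1) ((rs ++ t1 ++ t2).length - 1)]) = (rs ++ t1 ++ t2) ++ [SLPRule.pair ((rs ++ t1).length - 1) ((rs ++ t1 ++ t2).length - 1)] by simp]
    rw [ev_snoc]
    rw [List.getLast?_concat]
    simp only [hd1, hd2]

theorem builds_sq {n : ℕ} {s : List (Fin 2)} (h : Builds n s) :
    Builds (n + 1) (s ++ s) := by
  intro rs hrs
  obtain ⟨t1, w1, l1, p1, e1⟩ := h rs hrs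
  have hR1len : 0 < (rs ++ t1).length := by simp; omega
  have hlev1 : (ev (rs ++ t1)).length = (rs ++ t1).length := length_ev _
  have hd1 : (ev (rs ++ t1)).getD ((rs ++ t1).length - 1) [] = s := by
    rw [← hlev1]; exact getD_last e1 _
  refine ⟨t1 ++ [.pair ((rs ++ t1).length - 1) ((rs ++ t1).length - 1)], ?_, ?_, ?_, ?_⟩
  · rw [← List.append_assoc]
    exact WF_snoc w1 _ ⟨by omega, by omega⟩
  · simp; omega
  · simp
  · rw [← List.append_assoc, ev_snoc, List.getLast?_concat]
    simp only [hd1]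


def rep {α : Type*} (s : List α) (m : ℕ) : List α := (List.replicate m s).flatten

theorem rep_zero {α : Type*} (s : List α) : rep s 0 = [] := rfl
theorem rep_one {α : Type*} (s : List α) : rep s 1 = s := by simp [rep]
theorem rep_succ {α : Type*} (s : List α) (m : ℕ) : rep s (m + 1) = s ++ rep s m := by
  simp [rep, List.replicate_succ]
theorem rep_add {α : Type*} (s : List α) (a b : ℕ) :
    rep s (a + b) = rep s a ++ rep s b := by
  unfold rep; rw [List.replicate_add, List.flatten_append]

theorem rep_replicate {α : Type*} (v : α) (n m : ℕ) :
    rep (List.replicate n v) m = List.replicate (m * n) v := by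
  induction m with
  | zero => simp [rep_zero]
  | succ m ih => rw [rep_succ, ih, ← List.replicate_add]; ring_nf

def zer (m : ℕ) : List (Fin 2) := List.replicate m (0 : Fin 2)

-- map/range lemmas
theorem map_range_add {α : Type*} (f : ℕ → α) (a b : ℕ) :
    (List.range (a + b)).map f
      = (List.range a).map f ++ (List.range b).map (fun i => f (a + i)) := by
  rw [List.range_add, List.map_append, List.map_map]
  rfl

theorem map_range_const {α : Type*} {f : ℕ → α} {n : ℕ} {v : α}
    (h : ∀ i < n, f i = v) : (List.range n).map f = List.replicate n v := by
  rw [List.eq_replicate_iff]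
  constructor
  · simp
  · intro b hb
    simp only [List.mem_map, List.mem_range] at hb
    obtain ⟨i, hi, rfl⟩ := hb
    exact h i hi

theorem map_range_per {α : Type*} {f : ℕ → α} {B : ℕ}
    (hper : ∀ i, f (B + i) = f i) :
    ∀ m, (List.range (m * B)).map f = rep ((List.range B).map f) m := by
  intro m
  induction m with
  | zero => simp [rep_zero]
  | succ m ih =>
      have h1 : (m + 1) * B = B + m * B := by ring
      rw [h1, map_range_add, rep_succ]
      congr 1
      rw [← ih]
      exact List.map_congr_left (fun i _ => hper i)

theorem builds_pow2 {n : ℕ} {s : List (Fin 2)} (h : Builds n s) (k : ℕ) :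
    Builds (n + k) (rep s (2 ^ k)) := by
  induction k with
  | zero => rw [pow_zero, rep_one]; exact h.mono (by omega)
  | succ k ih =>
      have h2 : (2 : ℕ) ^ (k + 1) = 2 ^ k + 2 ^ k := by ring
      rw [h2, rep_add]
      exact (builds_sq ih).mono (by omega)

theorem zer_add (a b : ℕ) : zer (a + b) = zer a ++ zer b := List.replicate_add _ _ _

theorem builds_zer : ∀ m : ℕ, 1 ≤ m → Builds (3 * Nat.log 2 m + 1) (zer m) := by
  intro m
  induction m using Nat.strong_induction_on with
  | _ m ih =>
    intro hm
    rcases Nat.lt_or_ge m 2 with h2 | h2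
    · have : m = 1 := by omega
      subst this
      have : zer 1 = [(0 : Fin 2)] := rfl
      rw [this]
      exact (builds_sym 0).mono (by omega)
    · have hq1 : 1 ≤ m / 2 := by omega
      have hqlt : m / 2 < m := by omega
      have hlog : Nat.log 2 (m / 2) = Nat.log 2 m - 1 := Nat.log_div_base 2 m
      have hlogpos : 1 ≤ Nat.log 2 m := by
        have := Nat.log_pos (b := 2) one_lt_two h2
        omega
      have hb := builds_sq (ih (m / 2) hqlt hq1)
      rw [← zer_add] at hb
      rcases Nat.even_or_odd m with he | ho
      · have hme : m / 2 + m / 2 = m := by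
          obtain ⟨t, rfl⟩ := he; omega
        rw [hme] at hb
        exact hb.mono (by omega)
      · have hmo : m / 2 + m / 2 + 1 = m := by
          obtain ⟨t, ht⟩ := ho; omega
        have hcat := builds_cat hb (builds_sym 0)
        have heq : zer (m / 2 + m / 2) ++ [(0 : Fin 2)] = zer m := by
          have : zer (m / 2 + m / 2 + 1) = zer (m / 2 + m / 2) ++ zer 1 := zer_add _ 1
          rw [hmo] at this
          rw [this]; rfl
        rw [heq] at hcat
        exact hcat.mono (by omega)

theorem builds_zer_pre {n : ℕ} {s : List (Fin 2)} (m : ℕ) (h : Builds n s) :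
    Builds (3 * Nat.log 2 m + 2 + n) (zer m ++ s) := by
  rcases Nat.eq_zero_or_pos m with rfl | hm
  · have : zer 0 ++ s = s := rfl
    rw [this]; exact h.mono (by omega)
  · exact (builds_cat (builds_zer m hm) h).mono (by omega)

theorem builds_zer_suf {n : ℕ} {s : List (Fin 2)} (m : ℕ) (h : Builds n s) :
    Builds (n + (3 * Nat.log 2 m + 2)) (s ++ zer m) := by
  rcases Nat.eq_zero_or_pos m with rfl | hm
  · have : s ++ zer 0 = s := by simp [zer]
    rw [this]; exact h.mono (by omega)
  · exact (builds_cat h (builds_zer m hm)).mono (by omega)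

theorem evals_eq (G : SLP (Fin 2)) : SLP.evals G = ev G.rules := by
  unfold SLP.evals ev
  congr 1
  funext acc r
  cases r <;> rfl

theorem builds_flatten_map (g : ℕ → List (Fin 2)) (K : ℕ)
    (hg : ∀ i, Builds K (g i)) :
    ∀ b, 1 ≤ b → ∀ a, Builds (b * (K + 1)) (((List.range' a b).map g).flatten) := by
  intro b
  induction b with
  | zero => omega
  | succ b ih =>
      intro _ a
      rcases Nat.eq_zero_or_pos b with rfl | hb
      · have : ((List.range' a 1).map g).flatten = g a := by simp
        rw [this]
        exact (hg a).mono (by omega)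
      · have : (List.range' a (b + 1)).map g = g a :: (List.range' (a + 1) b).map g := by
          rw [List.range'_succ]; rfl
        rw [this, List.flatten_cons]
        exact (builds_cat (hg a) (ih hb (a + 1))).mono (by nlinarith)


theorem rep_singleton {α : Type*} (v : α) (m : ℕ) : rep [v] m = List.replicate m v := by
  rw [show [v] = List.replicate 1 v from rfl, rep_replicate, mul_one]

theorem bitcol (ℓ c : ℕ) (hc : c < ℓ) :
    (List.range (2 ^ ℓ)).map (fun r => bitOf2 ℓ r c)
      = rep (zer (2 ^ (ℓ - 1 - c)) ++ List.replicate (2 ^ (ℓ - 1 - c)) (1 : Fin 2))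
          (2 ^ c) := by
  set p := ℓ - 1 - c with hp
  have hpow : (0:ℕ) < 2 ^ p := Nat.pow_pos (by norm_num)
  have hsplit : (2:ℕ) ^ ℓ = 2 ^ c * (2 ^ p * 2) := by
    rw [← pow_succ, ← pow_add]
    congr 1; omega
  have hper : ∀ i : ℕ, bitOf2 ℓ (2 ^ p * 2 + i) c = bitOf2 ℓ i c := by
    intro i
    unfold bitOf2
    rw [← hp, Nat.mul_add_div hpow, Nat.add_mod_left]
  have hone : (List.range (2 ^ p * 2)).map (fun r => bitOf2 ℓ r c)
      = zer (2 ^ p) ++ List.replicate (2 ^ p) (1 : Fin 2) := by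
    have h2 : 2 ^ p * 2 = 2 ^ p + 2 ^ p := by ring
    rw [h2, map_range_add]
    congr 1
    · apply map_range_const
      intro i hi
      unfold bitOf2
      rw [← hp, Nat.div_eq_of_lt hi]
      norm_num
    · apply map_range_const
      intro i hi
      unfold bitOf2
      rw [← hp, show 2 ^ p + i = 2 ^ p * 1 + i by ring, Nat.mul_add_div hpow,
        Nat.div_eq_of_lt hi]
      norm_num
  rw [hsplit, map_range_per hper (2 ^ c), hone]


theorem spacedcol {L2 k : ℕ} (hk : k < L2) (m : ℕ) :
    (List.range (m * L2)).map (fun t => if t % L2 = k then (1 : Fin 2) else 0)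
      = rep (zer k ++ [(1 : Fin 2)] ++ zer (L2 - 1 - k)) m := by
  have hper : ∀ i : ℕ,
      (fun t => if t % L2 = k then (1 : Fin 2) else 0) (L2 + i)
        = (fun t => if t % L2 = k then (1 : Fin 2) else 0) i := by
    intro i
    simp only [Nat.add_mod_left]
  rw [map_range_per hper m]
  congr 1
  have hsum : List.range L2 = List.range (k + (1 + (L2 - 1 - k))) := by
    congr 1; omega
  rw [hsum, map_range_add, map_range_add, List.append_assoc]
  congr 1
  · apply map_range_const
    intro i hi
    have h1 : i % L2 = i := Nat.mod_eq_of_lt (by omega)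
    simp only [h1]
    rw [if_neg (by omega)]
  congr 1
  · have h1 : (List.range 1).map
        (fun i => if (k + i) % L2 = k then (1 : Fin 2) else 0) = [if k % L2 = k then (1:Fin 2) else 0] := by
      rfl
    rw [h1, Nat.mod_eq_of_lt hk, if_pos rfl]
  · apply map_range_const
    intro i hi
    have h1 : (k + (1 + i)) % L2 = k + (1 + i) := Nat.mod_eq_of_lt (by omega)
    simp only [h1]
    rw [if_neg (by omega)]

theorem flatten_map_const (g : ℕ → List (Fin 2)) (n : ℕ) :
    ∀ b a, (∀ i, a ≤ i → g i = zer n) →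
      ((List.range' a b).map g).flatten = zer (b * n) := by
  intro b
  induction b with
  | zero => intro a _; simp [zer]
  | succ b ih =>
      intro a hg
      have h1 : List.range' a (b + 1) = a :: List.range' (a + 1) b := by
        rw [List.range'_succ]
      rw [h1, List.map_cons, List.flatten_cons, hg a le_rfl,
        ih (a + 1) (fun i hi => hg i (by omega)),
        show (b + 1) * n = n + b * n by ring, zer_add]

-- MORE3
end S16

open S16 in
/-- there is a constant `c > 0` such that for every `ℓ ≥ 1`,
with `N = 2^ℓ(2ℓ+1)` and `A` the `N × N` 0/1 matrix (rows and columns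
0-indexed) whose top-left `(2^ℓ × 2ℓ)` block is `A'` (row `x` of `A'` is
`x ∘ 1^ℓ`), whose rows `2^ℓ, …, N-1` restricted to the columns `2ℓ, …, 4ℓ-1`
form the transpose of `B'` (columns of `B'` indexed by pairs `(y,k)` in
lexicographic order, with `B'[i,(y,k)] = 1` if `i = k < ℓ`, `= y_{k-ℓ}` if
`i = k ≥ ℓ`, and `= 0` otherwise), and all remaining entries `0`, there is an
SLP over `{0,1}` of size at most `c·ℓ²` generating the string of length `N²`
obtained by reading the entries of `A` column by column. -/
theorem stmt16 :
    ∃ c : ℝ, 0 < c ∧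
      ∀ ℓ : ℕ, 1 ≤ ℓ →
      let N : ℕ := 2 ^ ℓ * (2 * ℓ + 1)
      let Aent : ℕ → ℕ → Fin 2 := fun r c =>
        if r < 2 ^ ℓ ∧ c < 2 * ℓ then
          -- the top-left block `A'`
          (if c < ℓ then bitOf2 ℓ r c else 1)
        else if 2 ^ ℓ ≤ r ∧ 2 * ℓ ≤ c ∧ c < 4 * ℓ then
          -- the transpose of `B'`: row `r - 2^ℓ` of `B'ᵀ` corresponds to the
          -- column `(y, k)` of `B'` with `y = (r - 2^ℓ) / (2ℓ)`,
          -- `k = (r - 2^ℓ) % (2ℓ)`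
          (if c - 2 * ℓ = (r - 2 ^ ℓ) % (2 * ℓ) then
            (if (r - 2 ^ ℓ) % (2 * ℓ) < ℓ then 1
             else bitOf2 ℓ ((r - 2 ^ ℓ) / (2 * ℓ)) ((r - 2 ^ ℓ) % (2 * ℓ) - ℓ))
           else 0)
        else 0
      -- the entries of `A` read column by column
      let colStr : List (Fin 2) :=
        ((List.range N).map (fun c => (List.range N).map (fun r => Aent r c))).flatten
      ∃ G : SLP (Fin 2), G.generates colStr ∧ (G.size : ℝ) ≤ c * ℓ ^ 2 := by

  refine ⟨400, by norm_num, ?_⟩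
  intro ℓ hℓ N Aent colStr
  have hN : N = 2 ^ ℓ * (2 * ℓ + 1) := rfl
  have hcolStr : colStr
      = ((List.range N).map (fun c => (List.range N).map (fun r => Aent r c))).flatten := rfl
  -- basic numeric facts
  have hPl : ℓ < 2 ^ ℓ := Nat.lt_two_pow_self
  have hP1 : (1:ℕ) ≤ 2 ^ ℓ := by omega
  have h2l : 2 * ℓ < 2 ^ (2 * ℓ) := Nat.lt_two_pow_self
  have hl2pos : 0 < 2 * ℓ := by omega
  have hN3 : N ≤ 2 ^ (3 * ℓ) := by
    rw [hN, show 3 * ℓ = ℓ + 2 * ℓ by ring, pow_add]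
    exact Nat.mul_le_mul_left _ (by omega)
  have hB3 : 2 ^ ℓ * (2 * ℓ) ≤ 2 ^ (3 * ℓ) := by
    rw [show 3 * ℓ = ℓ + 2 * ℓ by ring, pow_add]
    exact Nat.mul_le_mul_left _ (by omega)
  have h4N : 4 * ℓ < N := by
    rw [hN]
    calc 4 * ℓ < (ℓ + 1) * (2 * ℓ + 1) := by nlinarith
    _ ≤ 2 ^ ℓ * (2 * ℓ + 1) := Nat.mul_le_mul_right _ (by omega)
  have hNpos : 0 < N := by omega
  have hlogB : Nat.log 2 (2 ^ ℓ * (2 * ℓ)) ≤ 3 * ℓ := by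
    calc Nat.log 2 (2 ^ ℓ * (2 * ℓ)) ≤ Nat.log 2 (2 ^ (3 * ℓ)) := Nat.log_mono_right hB3
    _ = 3 * ℓ := Nat.log_pow one_lt_two _
  have hlogN : Nat.log 2 N ≤ 3 * ℓ := by
    calc Nat.log 2 N ≤ Nat.log 2 (2 ^ (3 * ℓ)) := Nat.log_mono_right hN3
    _ = 3 * ℓ := Nat.log_pow one_lt_two _
  -- entry lemmas
  have hA1 : ∀ r c : ℕ, r < 2 ^ ℓ → c < ℓ → Aent r c = bitOf2 ℓ r c := by
    intro r c h1 h2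
    show (if r < 2 ^ ℓ ∧ c < 2 * ℓ then (if c < ℓ then bitOf2 ℓ r c else 1) else _) = _
    rw [if_pos ⟨h1, by omega⟩, if_pos h2]
  have hA2 : ∀ r c : ℕ, r < 2 ^ ℓ → ℓ ≤ c → c < 2 * ℓ → Aent r c = 1 := by
    intro r c h1 h2 h3
    show (if r < 2 ^ ℓ ∧ c < 2 * ℓ then (if c < ℓ then bitOf2 ℓ r c else 1) else _) = _
    rw [if_pos ⟨h1, h3⟩, if_neg (by omega)]
  have hA3 : ∀ r c : ℕ, r < 2 ^ ℓ → 2 * ℓ ≤ c → Aent r c = 0 := by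
    intro r c h1 h2
    show (if r < 2 ^ ℓ ∧ c < 2 * ℓ then (if c < ℓ then bitOf2 ℓ r c else 1)
      else if 2 ^ ℓ ≤ r ∧ 2 * ℓ ≤ c ∧ c < 4 * ℓ then _ else 0) = 0
    rw [if_neg (fun h => by omega), if_neg (fun h => absurd h1 (not_lt.mpr h.1))]
  have hA4 : ∀ t c : ℕ, c < 2 * ℓ → Aent (2 ^ ℓ + t) c = 0 := by
    intro t c h2
    show (if 2 ^ ℓ + t < 2 ^ ℓ ∧ c < 2 * ℓ then _
      else if 2 ^ ℓ ≤ 2 ^ ℓ + t ∧ 2 * ℓ ≤ c ∧ c < 4 * ℓ then _ else 0) = 0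
    rw [if_neg (fun h => by omega), if_neg (fun h => by omega)]
  have hA5 : ∀ t c : ℕ, 2 * ℓ ≤ c → c < 4 * ℓ →
      Aent (2 ^ ℓ + t) c
        = (if c - 2 * ℓ = t % (2 * ℓ) then
            (if t % (2 * ℓ) < ℓ then 1
             else bitOf2 ℓ (t / (2 * ℓ)) (t % (2 * ℓ) - ℓ))
           else 0) := by
    intro t c h2 h3
    show (if 2 ^ ℓ + t < 2 ^ ℓ ∧ c < 2 * ℓ then _
      else if 2 ^ ℓ ≤ 2 ^ ℓ + t ∧ 2 * ℓ ≤ c ∧ c < 4 * ℓ then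
        (if c - 2 * ℓ = (2 ^ ℓ + t - 2 ^ ℓ) % (2 * ℓ) then
            (if (2 ^ ℓ + t - 2 ^ ℓ) % (2 * ℓ) < ℓ then 1
             else bitOf2 ℓ ((2 ^ ℓ + t - 2 ^ ℓ) / (2 * ℓ)) ((2 ^ ℓ + t - 2 ^ ℓ) % (2 * ℓ) - ℓ))
           else 0)
      else 0) = _
    rw [if_neg (fun h => by omega), if_pos ⟨Nat.le_add_right _ _, h2, h3⟩,
      Nat.add_sub_cancel_left]
  have hA6 : ∀ r c : ℕ, 4 * ℓ ≤ c → Aent r c = 0 := by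
    intro r c h2
    show (if r < 2 ^ ℓ ∧ c < 2 * ℓ then _
      else if 2 ^ ℓ ≤ r ∧ 2 * ℓ ≤ c ∧ c < 4 * ℓ then _ else 0) = 0
    rw [if_neg (fun h => by omega), if_neg (fun h => by omega)]
  -- column splitting
  have hsplitN : ∀ c : ℕ, (List.range N).map (fun r => Aent r c)
      = (List.range (2 ^ ℓ)).map (fun r => Aent r c)
        ++ (List.range (2 ^ ℓ * (2 * ℓ))).map (fun t => Aent (2 ^ ℓ + t) c) := by
    intro c
    rw [show List.range N = List.range (2 ^ ℓ + 2 ^ ℓ * (2 * ℓ)) by rw [hN]; ring_nf,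
      map_range_add]
  -- column identities
  have hcol1 : ∀ c, c < ℓ → (List.range N).map (fun r => Aent r c)
      = rep (zer (2 ^ (ℓ - 1 - c)) ++ List.replicate (2 ^ (ℓ - 1 - c)) (1 : Fin 2)) (2 ^ c)
        ++ zer (2 ^ ℓ * (2 * ℓ)) := by
    intro c hc
    rw [hsplitN c]
    congr 1
    · rw [List.map_congr_left (fun r hr => hA1 r c (List.mem_range.mp hr) hc)]
      exact bitcol ℓ c hc
    · exact map_range_const (fun t _ => hA4 t c (by omega))
  have hcol2 : ∀ c, ℓ ≤ c → c < 2 * ℓ → (List.range N).map (fun r => Aent r c)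
      = List.replicate (2 ^ ℓ) (1 : Fin 2) ++ zer (2 ^ ℓ * (2 * ℓ)) := by
    intro c h1 h2
    rw [hsplitN c]
    congr 1
    · exact map_range_const (fun r hr => hA2 r c hr h1 h2)
    · exact map_range_const (fun t _ => hA4 t c h2)
  have hcol3 : ∀ c, 2 * ℓ ≤ c → c < 3 * ℓ → (List.range N).map (fun r => Aent r c)
      = zer (2 ^ ℓ)
        ++ rep (zer (c - 2 * ℓ) ++ [(1 : Fin 2)] ++ zer (2 * ℓ - 1 - (c - 2 * ℓ)))
            (2 ^ ℓ) := by
    intro c h1 h2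
    rw [hsplitN c]
    congr 1
    · exact map_range_const (fun r hr => hA3 r c hr h1)
    · have hpt : ∀ t : ℕ, Aent (2 ^ ℓ + t) c
          = (if t % (2 * ℓ) = c - 2 * ℓ then (1 : Fin 2) else 0) := by
        intro t
        rw [hA5 t c h1 (by omega)]
        by_cases h : t % (2 * ℓ) = c - 2 * ℓ
        · rw [if_pos h.symm, if_pos (by omega), if_pos h]
        · rw [if_neg (fun e => h e.symm), if_neg h]
      rw [List.map_congr_left (fun t _ => hpt t)]
      exact spacedcol (by omega) (2 ^ ℓ)
  have hcol4 : ∀ c, 3 * ℓ ≤ c → c < 4 * ℓ → (List.range N).map (fun r => Aent r c)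
      = zer (2 ^ ℓ)
        ++ rep (zer (2 * ℓ * 2 ^ (2 * ℓ - 1 - (c - 2 * ℓ)))
            ++ rep (zer (c - 2 * ℓ) ++ [(1 : Fin 2)] ++ zer (2 * ℓ - 1 - (c - 2 * ℓ)))
                (2 ^ (2 * ℓ - 1 - (c - 2 * ℓ))))
            (2 ^ (ℓ - 1 - (2 * ℓ - 1 - (c - 2 * ℓ)))) := by
    intro c h1 h2
    set k := c - 2 * ℓ with hk
    set p := 2 * ℓ - 1 - k with hp
    have hkl : ℓ ≤ k := by omega
    have hkl2 : k < 2 * ℓ := by omega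
    have hpl : p < ℓ := by omega
    have hppos : (0:ℕ) < 2 ^ p := Nat.pow_pos (by norm_num)
    rw [hsplitN c]
    congr 1
    · exact map_range_const (fun r hr => hA3 r c hr (by omega))
    · have hpt : ∀ t : ℕ, Aent (2 ^ ℓ + t) c
          = (if t % (2 * ℓ) = k then
              (if t / (2 * ℓ) / 2 ^ p % 2 = 1 then (1 : Fin 2) else 0) else 0) := by
        intro t
        rw [hA5 t c (by omega) (by omega)]
        by_cases h : t % (2 * ℓ) = k
        · rw [if_pos h.symm, if_neg (by omega), if_pos h, h]
          unfold bitOf2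
          rw [show ℓ - 1 - (k - ℓ) = p by omega]
        · rw [if_neg (fun e => h e.symm), if_neg h]
      rw [List.map_congr_left (fun t _ => hpt t)]
      set F : ℕ → Fin 2 := fun t =>
        if t % (2 * ℓ) = k then
          (if t / (2 * ℓ) / 2 ^ p % 2 = 1 then (1 : Fin 2) else 0) else 0 with hF
      have hper : ∀ t : ℕ, F (2 * ℓ * (2 ^ p * 2) + t) = F t := by
        intro t
        rw [hF]
        simp only
        rw [Nat.mul_add_mod, Nat.mul_add_div hl2pos, Nat.mul_add_div hppos,
          Nat.add_mod_left]
      have hsplit2 : 2 ^ ℓ * (2 * ℓ) = 2 ^ (ℓ - 1 - p) * (2 * ℓ * (2 ^ p * 2)) := by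
        rw [show (2:ℕ) ^ ℓ = 2 ^ (ℓ - 1 - p) * (2 ^ p * 2) by
          rw [← pow_succ, ← pow_add]; congr 1; omega]
        ring
      rw [hsplit2, map_range_per hper]
      congr 1
      rw [show 2 * ℓ * (2 ^ p * 2) = 2 * ℓ * 2 ^ p + 2 * ℓ * 2 ^ p by ring,
        map_range_add]
      congr 1
      · apply map_range_const
        intro t ht
        rw [hF]
        simp only
        have hdlt : t / (2 * ℓ) < 2 ^ p := by
          rw [Nat.div_lt_iff_lt_mul hl2pos]
          exact Nat.lt_of_lt_of_eq ht (mul_comm _ _)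
        rw [Nat.div_eq_of_lt hdlt]
        simp
      · have hg : ∀ i : ℕ, i < 2 * ℓ * 2 ^ p →
            F (2 * ℓ * 2 ^ p + i) = (if i % (2 * ℓ) = k then (1 : Fin 2) else 0) := by
          intro i hi
          rw [hF]
          simp only
          rw [Nat.mul_add_mod]
          have hd : (2 * ℓ * 2 ^ p + i) / (2 * ℓ) / 2 ^ p % 2 = 1 := by
            rw [Nat.mul_add_div hl2pos,
              show 2 ^ p + i / (2 * ℓ) = 2 ^ p * 1 + i / (2 * ℓ) by ring,
              Nat.mul_add_div hppos,
              Nat.div_eq_of_lt (by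
                rw [Nat.div_lt_iff_lt_mul hl2pos]
                exact Nat.lt_of_lt_of_eq hi (mul_comm _ _))]
          rw [hd]
          simp
        rw [List.map_congr_left (fun i hi => hg i (List.mem_range.mp hi)),
          show 2 * ℓ * 2 ^ p = 2 ^ p * (2 * ℓ) by ring]
        exact spacedcol (by omega) (2 ^ p)
  have hcol5 : ∀ c, 4 * ℓ ≤ c → (List.range N).map (fun r => Aent r c) = zer N :=
    fun c hc => map_range_const (fun r _ => hA6 r c hc)
  -- builders for single columns
  have hbcol : ∀ c : ℕ, Builds (90 * ℓ) ((List.range N).map (fun r => Aent r c)) := by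
    intro c
    rcases Nat.lt_or_ge c ℓ with hc | hc
    · -- bit columns
      rw [hcol1 c hc]
      have e1 : Nat.log 2 (2 ^ (ℓ - 1 - c)) = ℓ - 1 - c := Nat.log_pow one_lt_two _
      have b1 := builds_zer (2 ^ (ℓ - 1 - c)) (Nat.pow_pos (by norm_num))
      have b2 := builds_pow2 (builds_sym 1) (ℓ - 1 - c)
      rw [rep_singleton] at b2
      have b3 := builds_pow2 (builds_cat b1 b2) c
      have b4 := builds_zer_suf (2 ^ ℓ * (2 * ℓ)) b3
      exact b4.mono (by omega)
    rcases Nat.lt_or_ge c (2 * ℓ) with hc2 | hc2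
    · -- ones columns
      rw [hcol2 c hc hc2]
      have b2 := builds_pow2 (builds_sym 1) ℓ
      rw [rep_singleton] at b2
      have b4 := builds_zer_suf (2 ^ ℓ * (2 * ℓ)) b2
      exact b4.mono (by omega)
    rcases Nat.lt_or_ge c (4 * ℓ) with hc4 | hc4
    · -- the B' columns
      have hlk : Nat.log 2 (c - 2 * ℓ) ≤ 2 * ℓ :=
        le_trans (Nat.log_le_self _ _) (by omega)
      have hlk2 : Nat.log 2 (2 * ℓ - 1 - (c - 2 * ℓ)) ≤ 2 * ℓ :=
        le_trans (Nat.log_le_self _ _) (by omega)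
      have eP : Nat.log 2 (2 ^ ℓ) = ℓ := Nat.log_pow one_lt_two _
      have b1 := builds_zer_suf (2 * ℓ - 1 - (c - 2 * ℓ)) (builds_sym 1)
      have b2 := builds_zer_pre (c - 2 * ℓ) b1
      rw [← List.append_assoc] at b2
      rcases Nat.lt_or_ge c (3 * ℓ) with hc3 | hc3
      · rw [hcol3 c hc2 hc3]
        have b3 := builds_pow2 b2 ℓ
        have b4 := builds_zer_pre (2 ^ ℓ) b3
        exact b4.mono (by omega)
      · rw [hcol4 c hc3 hc4]
        set p := 2 * ℓ - 1 - (c - 2 * ℓ) with hp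
        have hpℓ : p < ℓ := by omega
        have hlogBp : Nat.log 2 (2 * ℓ * 2 ^ p) ≤ 3 * ℓ := by
          calc Nat.log 2 (2 * ℓ * 2 ^ p) ≤ Nat.log 2 (2 ^ (3 * ℓ)) := by
                apply Nat.log_mono_right
                calc 2 * ℓ * 2 ^ p ≤ 2 ^ (2 * ℓ) * 2 ^ ℓ :=
                      Nat.mul_le_mul (by omega) (Nat.pow_le_pow_right (by norm_num) (by omega))
                _ = 2 ^ (3 * ℓ) := by rw [← pow_add]; ring_nf
          _ = 3 * ℓ := Nat.log_pow one_lt_two _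
        have b3 := builds_pow2 b2 p
        have b4 := builds_zer_pre (2 * ℓ * 2 ^ p) b3
        have b5 := builds_pow2 b4 (ℓ - 1 - p)
        have b6 := builds_zer_pre (2 ^ ℓ) b5
        exact b6.mono (by omega)
    · -- zero columns
      rw [hcol5 c hc4]
      exact (builds_zer N hNpos).mono (by omega)
  -- assembling the whole string
  obtain ⟨M, hM⟩ : ∃ M, N = 4 * ℓ + M := ⟨N - 4 * ℓ, by omega⟩
  have hMpos : 0 < M := by omega
  have hr : List.range N
      = List.range' 0 (4 * ℓ) ++ List.range' (4 * ℓ) M := by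
    have h := List.range'_append (s := 0) (m := 4 * ℓ) (n := M) (step := 1)
    simp only [one_mul, zero_add] at h
    rw [List.range_eq_range', hM, show 4 * ℓ + M = M + 4 * ℓ by omega]
    exact (Nat.add_comm M (4 * ℓ) ▸ h.symm)
  have hsplitgen : ∀ g : ℕ → List (Fin 2), (∀ i, 4 * ℓ ≤ i → g i = zer N) →
      ((List.range N).map g).flatten
        = ((List.range' 0 (4 * ℓ)).map g).flatten ++ zer (M * N) := by
    intro g hg
    rw [hr, List.map_append, List.flatten_append]
    congr 1
    exact flatten_map_const g N M (4 * ℓ) hg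
  have hsplit0 : colStr
      = ((List.range' 0 (4 * ℓ)).map
          (fun c => (List.range N).map (fun r => Aent r c))).flatten
        ++ zer (M * N) := by
    rw [hcolStr]
    exact hsplitgen _ (fun i hi => hcol5 i hi)
  have hlogMN : Nat.log 2 (M * N) ≤ 6 * ℓ := by
    calc Nat.log 2 (M * N) ≤ Nat.log 2 (2 ^ (6 * ℓ)) := by
          apply Nat.log_mono_right
          calc M * N ≤ N * N := Nat.mul_le_mul_right _ (by omega)
          _ ≤ 2 ^ (3 * ℓ) * 2 ^ (3 * ℓ) := Nat.mul_le_mul hN3 hN3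
          _ = 2 ^ (6 * ℓ) := by rw [← pow_add]; ring_nf
    _ = 6 * ℓ := Nat.log_pow one_lt_two _
  have hb1 := builds_flatten_map (fun c => (List.range N).map (fun r => Aent r c))
    (90 * ℓ) hbcol (4 * ℓ) (by omega) 0
  have hb2 := builds_zer (M * N) (Nat.mul_pos hMpos hNpos)
  have hball := builds_cat hb1 hb2
  rw [← hsplit0] at hball
  have hmain : Builds (400 * ℓ ^ 2) colStr := by
    apply hball.mono
    have h1 : 4 * ℓ * (90 * ℓ + 1) + (3 * Nat.log 2 (M * N) + 1) + 1
        ≤ 360 * ℓ ^ 2 + 22 * ℓ + 2 := by nlinarith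
    have h2 : 360 * ℓ ^ 2 + 22 * ℓ + 2 ≤ 400 * ℓ ^ 2 := by nlinarith
    omega
  obtain ⟨ts, w, hlen, hpos, hevl⟩ := hmain [] (by intro i; exact absurd i.isLt (by simp))
  rw [List.nil_append] at w hevl
  refine ⟨⟨ts, ?_⟩, ?_, ?_⟩
  · intro i
    have hw := w i
    rcases hg : ts.get i with a | ⟨j, k⟩
    · trivial
    · rw [hg] at hw
      exact hw
  · show (SLP.evals _).getLast? = some colStr
    rw [evals_eq]
    exact hevl
  · show ((ts.length : ℕ) : ℝ) ≤ 400 * (ℓ : ℝ) ^ 2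
    have hfin : ts.length ≤ 400 * ℓ ^ 2 := hlen
    calc ((ts.length : ℕ) : ℝ) ≤ ((400 * ℓ ^ 2 : ℕ) : ℝ) := by exact_mod_cast hfin
    _ = 400 * (ℓ : ℝ) ^ 2 := by push_cast; ring
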